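/- Fix u, k, ω, σ > 0 and β > 0. Then λ ∫₀^∞ exp(−λα − ½k²σ²(α + β + λ^{−1})) sin(ω(α+β)) sinh((k²σ²/(2λ)) e^{−λ(α+β)}) dα tends to 0 as λ → ∞. -/

import Mathlib

open MeasureTheory Real Set

/-- The paper's leading-order Stokes'-drift kernel `M(β)` for the elastic dumbbell,
with wave amplitude `u`, wavenumber `k`, frequency `ω`, noise strength `σ`,
and spring constant `l` (the paper's `λ`). -/
noncomputable def stokesKernel (u k ω σ l β : ℝ) : ℝ :=
  (1 / 2) * u ^ 2 * k *
    (Real.sin (ω * β) *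
        Real.exp (-(k ^ 2 * σ ^ 2 / 2) * (β + l⁻¹ * (1 - Real.exp (-(l * β))))) -
      l * ∫ α in Ioi (0 : ℝ),
        Real.exp (-(l * α) - k ^ 2 * σ ^ 2 / 2 * (α + β + l⁻¹)) * Real.sin (ω * (α + β)) *
          Real.sinh (k ^ 2 * σ ^ 2 / (2 * l) * Real.exp (-(l * (α + β)))))

lemma sinh_nonneg' {x : ℝ} (hx : 0 ≤ x) : 0 ≤ Real.sinh x := by
  rw [← Real.sinh_zero]; exact Real.sinh_le_sinh.2 hx

lemma sinh_le_mul_exp {x : ℝ} (hx : 0 ≤ x) : Real.sinh x ≤ x * Real.exp x := by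
  rw [Real.sinh_eq]
  have h1 : 1 - 2 * x ≤ Real.exp (-(2 * x)) := by linarith [Real.add_one_le_exp (-(2 * x))]
  have h2 : Real.exp (-x) = Real.exp x * Real.exp (-(2 * x)) := by
    rw [← Real.exp_add]; ring_nf
  nlinarith [Real.exp_pos x, Real.exp_pos (-x)]

lemma integral_exp_neg_mul_Ioi {l : ℝ} (hl : 0 < l) :
    (∫ x in Ioi (0 : ℝ), Real.exp (-(l * x))) = l⁻¹ := by
  have := integral_comp_mul_left_Ioi (fun x => Real.exp (-x)) 0 hl
  simp only [mul_zero, smul_eq_mul] at this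
  rw [show (fun x : ℝ => Real.exp (-(l * x))) = fun x : ℝ => Real.exp (-(l * x)) from rfl]
  calc (∫ x in Ioi (0 : ℝ), Real.exp (-(l * x)))
      = l⁻¹ * ∫ x in Ioi (0 : ℝ), Real.exp (-x) := this
    _ = l⁻¹ := by rw [integral_exp_neg_Ioi_zero, mul_one]

set_option maxHeartbeats 1000000 in
/-- The second term of the Stokes'-drift kernel vanishes in the strong-spring limit
`λ → ∞`. -/
theorem kernel_second_term_tendsto_zero_strong_spring (u k ω σ β : ℝ)
    (hu : 0 < u) (hk : 0 < k) (hω : 0 < ω) (hσ : 0 < σ) (hβ : 0 < β) :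
    Filter.Tendsto
      (fun l : ℝ =>
        l * ∫ α in Ioi (0 : ℝ),
          Real.exp (-(l * α) - k ^ 2 * σ ^ 2 / 2 * (α + β + l⁻¹)) * Real.sin (ω * (α + β)) *
            Real.sinh (k ^ 2 * σ ^ 2 / (2 * l) * Real.exp (-(l * (α + β)))))
      Filter.atTop (nhds 0) := by
  set c : ℝ := k ^ 2 * σ ^ 2 with hc
  have hcpos : 0 < c := by positivity
  set C : ℝ := c / 2 * Real.exp (c / 2) with hC
  have hCpos : 0 < C := by positivity
  apply tendsto_zero_iff_norm_tendsto_zero.mpr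
  apply squeeze_zero' (g := fun l => C * Real.exp (-(l * β)))
    (Filter.Eventually.of_forall fun l => norm_nonneg _)
  · filter_upwards [Filter.eventually_ge_atTop (1 : ℝ)] with l hl
    have hl0 : (0 : ℝ) < l := lt_of_lt_of_le one_pos hl
    -- pointwise bound
    have hbound : ∀ α ∈ Ioi (0 : ℝ),
        ‖Real.exp (-(l * α) - c / 2 * (α + β + l⁻¹)) * Real.sin (ω * (α + β)) *
          Real.sinh (c / (2 * l) * Real.exp (-(l * (α + β))))‖ ≤
        C * Real.exp (-(l * β)) * Real.exp (-(l * α)) := by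
      intro α hα
      have hα0 : 0 < α := hα
      set x : ℝ := c / (2 * l) * Real.exp (-(l * (α + β))) with hx
      have hx0 : 0 ≤ x := by positivity
      have hxle : x ≤ c / 2 * Real.exp (-(l * β)) := by
        have h1 : Real.exp (-(l * (α + β))) ≤ Real.exp (-(l * β)) := by
          apply Real.exp_le_exp.2; nlinarith
        have h2 : c / (2 * l) ≤ c / 2 := by
          apply div_le_div_of_nonneg_left (le_of_lt hcpos) two_pos; linarith
        calc x ≤ c / (2 * l) * Real.exp (-(l * β)) := by
              apply mul_le_mul_of_nonneg_left h1; positivity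
          _ ≤ c / 2 * Real.exp (-(l * β)) := by
              apply mul_le_mul_of_nonneg_right h2 (Real.exp_nonneg _)
      have hxle2 : x ≤ c / 2 := by
        have : Real.exp (-(l * β)) ≤ 1 := Real.exp_le_one_iff.2 (by nlinarith)
        nlinarith
      have hsinh : Real.sinh x ≤ c / 2 * Real.exp (-(l * β)) * Real.exp (c / 2) := by
        calc Real.sinh x ≤ x * Real.exp x := sinh_le_mul_exp hx0
          _ ≤ (c / 2 * Real.exp (-(l * β))) * Real.exp (c / 2) := by
              apply mul_le_mul hxle (Real.exp_le_exp.2 hxle2) (Real.exp_nonneg _)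
              positivity
      have hexp : Real.exp (-(l * α) - c / 2 * (α + β + l⁻¹)) ≤ Real.exp (-(l * α)) := by
        apply Real.exp_le_exp.2
        have : 0 ≤ c / 2 * (α + β + l⁻¹) := by positivity
        linarith
      rw [norm_mul, norm_mul, Real.norm_eq_abs, Real.norm_eq_abs, Real.norm_eq_abs,
        Real.abs_exp, abs_of_nonneg (sinh_nonneg' hx0)]
      calc Real.exp (-(l * α) - c / 2 * (α + β + l⁻¹)) * |Real.sin (ω * (α + β))| *
            Real.sinh x
          ≤ Real.exp (-(l * α)) * 1 * (c / 2 * Real.exp (-(l * β)) * Real.exp (c / 2)) := by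
            apply mul_le_mul _ hsinh (sinh_nonneg' hx0) (by positivity)
            apply mul_le_mul hexp (abs_le.2 ⟨Real.neg_one_le_sin _, Real.sin_le_one _⟩) (abs_nonneg _) (Real.exp_nonneg _)
        _ = C * Real.exp (-(l * β)) * Real.exp (-(l * α)) := by rw [hC]; ring
    have hint : IntegrableOn
        (fun α => C * Real.exp (-(l * β)) * Real.exp (-(l * α))) (Ioi (0 : ℝ)) :=
      by show Integrable _ (volume.restrict (Ioi (0 : ℝ))); simpa [neg_mul] using (exp_neg_integrableOn_Ioi 0 hl0).const_mul (C * Real.exp (-(l * β)))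
    have hnorm : ‖∫ α in Ioi (0 : ℝ),
        Real.exp (-(l * α) - c / 2 * (α + β + l⁻¹)) * Real.sin (ω * (α + β)) *
          Real.sinh (c / (2 * l) * Real.exp (-(l * (α + β))))‖ ≤
        ∫ α in Ioi (0 : ℝ), C * Real.exp (-(l * β)) * Real.exp (-(l * α)) := by
      apply norm_integral_le_of_norm_le hint
      filter_upwards [ae_restrict_mem measurableSet_Ioi] with α hα
      exact hbound α hα
    have hval : (∫ α in Ioi (0 : ℝ), C * Real.exp (-(l * β)) * Real.exp (-(l * α)))
        = C * Real.exp (-(l * β)) * l⁻¹ := by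
      rw [integral_const_mul, integral_exp_neg_mul_Ioi hl0]
    rw [hval] at hnorm
    rw [norm_mul, Real.norm_eq_abs, Real.norm_eq_abs, abs_of_pos hl0]
    calc l * |∫ α in Ioi (0 : ℝ),
          Real.exp (-(l * α) - c / 2 * (α + β + l⁻¹)) * Real.sin (ω * (α + β)) *
            Real.sinh (c / (2 * l) * Real.exp (-(l * (α + β))))|
        ≤ l * (C * Real.exp (-(l * β)) * l⁻¹) := by
          apply mul_le_mul_of_nonneg_left _ (le_of_lt hl0)
          exact hnorm
      _ = C * Real.exp (-(l * β)) := by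
          rw [mul_comm (C * Real.exp (-(l * β))) l⁻¹, ← mul_assoc,
            mul_inv_cancel₀ (ne_of_gt hl0), one_mul]
  · have h1 : Filter.Tendsto (fun l : ℝ => -(l * β)) Filter.atTop Filter.atBot := by
      apply Filter.tendsto_neg_atBot_iff.2
      exact Filter.Tendsto.atTop_mul_const hβ Filter.tendsto_id
    have h2 := Real.tendsto_exp_atBot.comp h1
    have := h2.const_mul C
    simpa using this
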